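/- Under rerandomization with a symmetric acceptance criterion and equal group sizes, the difference-in-means estimator is unbiased for the average treatment effect: E(τ̂ | φ = 1) = τ, where τ̂ = (2/n)Σ W_i y_i(1) − (2/n)Σ(1−W_i)y_i(0) and τ = (1/n)Σ(y_i(1) − y_i(0)). -/

import Mathlib

open Finset

/-- Under rerandomization with a symmetric acceptance criterion and equal group sizes,
the difference-in-means estimator is unbiased: `E(τ̂ | φ = 1) = τ`. -/
theorem stmt1 (n : ℕ) (hn : Even n) (hpos : 0 < n) (y1 y0 : Fin n → ℝ)
    (A : Finset (Fin n → Bool)) (hA : A.Nonempty)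
    (hsize : ∀ W ∈ A, (univ.filter fun i => W i = true).card = n / 2)
    (hsym : ∀ W ∈ A, (fun i => !(W i)) ∈ A) :
    (∑ W ∈ A, ((2 / (n : ℝ)) * ∑ i, (if W i then y1 i else 0)
        - (2 / (n : ℝ)) * ∑ i, (if W i then 0 else y0 i))) / A.card
      = (∑ i, (y1 i - y0 i)) / n := by
  set f : (Fin n → Bool) → ℝ := fun W =>
    (2 / (n : ℝ)) * ∑ i, (if W i then y1 i else 0)
      - (2 / (n : ℝ)) * ∑ i, (if W i then 0 else y0 i) with hf
  have hn0 : (n : ℝ) ≠ 0 := by positivity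
  have hcard0 : (A.card : ℝ) ≠ 0 := by
    exact_mod_cast Finset.card_ne_zero_of_mem hA.choose_spec
  have hpair : ∀ W : Fin n → Bool,
      f W + f (fun i => !(W i)) = (2 / (n : ℝ)) * ∑ i, (y1 i - y0 i) := by
    intro W
    have h1 : (∑ i, (if W i then y1 i else 0)) + ∑ i, (if !(W i) then y1 i else 0)
        = ∑ i, y1 i := by
      rw [← Finset.sum_add_distrib]
      refine Finset.sum_congr rfl fun i _ => ?_
      cases h : W i <;> simp
    have h0 : (∑ i, (if W i then 0 else y0 i)) + ∑ i, (if !(W i) then 0 else y0 i)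
        = ∑ i, y0 i := by
      rw [← Finset.sum_add_distrib]
      refine Finset.sum_congr rfl fun i _ => ?_
      cases h : W i <;> simp
    have hsub : ∑ i, (y1 i - y0 i) = (∑ i, y1 i) - ∑ i, y0 i :=
      Finset.sum_sub_distrib _ _
    simp only [hf]
    rw [hsub]
    linear_combination (2 / (n:ℝ)) * h1 - (2 / (n:ℝ)) * h0
  have hswap : ∑ W ∈ A, f W = ∑ W ∈ A, f (fun i => !(W i)) := by
    refine Finset.sum_nbij' (fun W => fun i => !(W i)) (fun W => fun i => !(W i))
      (fun W hW => hsym W hW) (fun W hW => hsym W hW) ?_ ?_ ?_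
    · intro W _; funext i; simp
    · intro W _; funext i; simp
    · intro W _; simp
  have hS : 2 * ∑ W ∈ A, f W = A.card * ((2 / (n : ℝ)) * ∑ i, (y1 i - y0 i)) := by
    rw [two_mul]
    nth_rewrite 2 [hswap]
    rw [← Finset.sum_add_distrib]
    rw [Finset.sum_congr rfl fun W _ => hpair W]
    simp [mul_comm]
  have hSval : ∑ W ∈ A, f W = A.card * ((∑ i, (y1 i - y0 i)) / n) := by
    field_simp at hS ⊢
    linarith
  rw [hSval]
  field_simp
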